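/- Let q ∈ ℂ with 0 < ‖q‖ < 1 and let z ∈ ℂ be such that 1 + z·qⁿ ≠ 0 for all integers n ≥ 0. Then the family (fun n : ℕ ↦ (1 + z·q^{n+1})^{−(n+1)}) is multipliable (and similarly at the arguments qz and q^{−1}z), and the function ψ(u) := ∏_{n=1}^{∞} (1 + u·qⁿ)^{−n} satisfies the functional equation (1 + z)·ψ(q·z)·ψ(q^{−1}·z) = ψ(z)². -/

import Mathlib

open Complex Filter

/-- Summability of the weighted logarithms. -/
lemma qPoch_aux_summable (q w : ℂ) (hq1 : ‖q‖ < 1) (e : ℕ → ℤ)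
    (he : ∀ n, |e n| ≤ (n : ℤ) + 2) :
    Summable (fun n : ℕ => (e n : ℂ) * Complex.log (1 + w * q ^ (n + 1))) := by
  have hq' : ‖(‖q‖)‖ < 1 := by rwa [Real.norm_of_nonneg (norm_nonneg q)]
  have S1 : Summable (fun n : ℕ => (n : ℝ) * ‖q‖ ^ n) := by
    simpa using summable_pow_mul_geometric_of_norm_lt_one 1 hq'
  have S2 : Summable (fun n : ℕ => ‖q‖ ^ n) :=
    summable_geometric_of_lt_one (norm_nonneg q) hq1
  have hsum : Summable (fun n : ℕ => ((n : ℝ) + 2) * (3 / 2 * (‖w‖ * ‖q‖ ^ (n + 1)))) := by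
    refine ((S1.mul_left (3 / 2 * ‖w‖ * ‖q‖)).add (S2.mul_left (3 * ‖w‖ * ‖q‖))).congr
      fun n => ?_
    rw [pow_succ]
    ring
  refine Summable.of_norm_bounded_eventually hsum ?_
  rw [Nat.cofinite_eq_atTop]
  have htend : Tendsto (fun n : ℕ => ‖w‖ * ‖q‖ ^ (n + 1)) atTop (nhds 0) := by
    have h0 : Tendsto (fun n : ℕ => ‖w‖ * ‖q‖ ^ n) atTop (nhds 0) := by
      simpa using (tendsto_pow_atTop_nhds_zero_of_lt_one (norm_nonneg q) hq1).const_mul ‖w‖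
    exact h0.comp (tendsto_add_atTop_nat 1)
  filter_upwards [htend.eventually_lt_const (by norm_num : (0 : ℝ) < 1 / 2)] with n hn
  have hw : ‖w * q ^ (n + 1)‖ ≤ 1 / 2 := by
    rw [norm_mul, norm_pow]; exact hn.le
  have hlog : ‖Complex.log (1 + w * q ^ (n + 1))‖ ≤ 3 / 2 * ‖w * q ^ (n + 1)‖ :=
    Complex.norm_log_one_add_half_le_self hw
  have hne : ‖(e n : ℂ)‖ ≤ (n : ℝ) + 2 := by
    rw [Complex.norm_intCast]
    have := he n
    calc |(e n : ℝ)| = ((|e n| : ℤ) : ℝ) := by push_cast; simp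
    _ ≤ (((n : ℤ) + 2 : ℤ) : ℝ) := by exact_mod_cast this
    _ = (n : ℝ) + 2 := by push_cast; ring
  calc ‖(e n : ℂ) * Complex.log (1 + w * q ^ (n + 1))‖
      = ‖(e n : ℂ)‖ * ‖Complex.log (1 + w * q ^ (n + 1))‖ := norm_mul _ _
    _ ≤ ((n : ℝ) + 2) * (3 / 2 * ‖w * q ^ (n + 1)‖) := by
        exact mul_le_mul hne hlog (norm_nonneg _) (by positivity)
    _ = ((n : ℝ) + 2) * (3 / 2 * (‖w‖ * ‖q‖ ^ (n + 1))) := by rw [norm_mul, norm_pow]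

/-- Multipliability of the general factors. -/
lemma qPoch_aux_mult (q w : ℂ) (hq1 : ‖q‖ < 1)
    (h : ∀ n : ℕ, 1 + w * q ^ (n + 1) ≠ 0) (e : ℕ → ℤ)
    (he : ∀ n, |e n| ≤ (n : ℤ) + 2) :
    Multipliable (fun n : ℕ => (1 + w * q ^ (n + 1)) ^ (e n)) := by
  have hs := qPoch_aux_summable q w hq1 e he
  have hp : HasProd
      (cexp ∘ fun n : ℕ => (e n : ℂ) * Complex.log (1 + w * q ^ (n + 1)))
      (cexp (∑' n : ℕ, (e n : ℂ) * Complex.log (1 + w * q ^ (n + 1)))) :=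
    hs.hasSum.cexp
  refine Multipliable.congr ⟨_, hp⟩ fun n => ?_
  show cexp ((e n : ℂ) * Complex.log (1 + w * q ^ (n + 1))) = (1 + w * q ^ (n + 1)) ^ (e n)
  rw [Complex.exp_int_mul, Complex.exp_log (h n)]

/-- The reciprocal double q-Pochhammer symbol `ψ(u) = 1/(-qu; q, q)_∞ = ∏_{n=1}^∞ (1 + u·qⁿ)^{-n}`. -/
noncomputable def qPochDoubleInv (q u : ℂ) : ℂ := ∏' n : ℕ, (1 + u * q ^ (n + 1)) ^ (-(n + 1 : ℤ))

/-- For `0 < ‖q‖ < 1` and `1 + z·qⁿ ≠ 0` for all `n ≥ 0`, the products defining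
`ψ(z)`, `ψ(qz)`, `ψ(q⁻¹z)` are multipliable and `ψ` satisfies
`(1 + z)·ψ(qz)·ψ(q⁻¹z) = ψ(z)²`. -/
theorem qPochDoubleInv_multipliable_and_bilinear (q z : ℂ) (hq0 : 0 < ‖q‖) (hq1 : ‖q‖ < 1)
    (hz : ∀ n : ℕ, 1 + z * q ^ n ≠ 0) :
    Multipliable (fun n : ℕ => (1 + z * q ^ (n + 1)) ^ (-(n + 1 : ℤ))) ∧
    Multipliable (fun n : ℕ => (1 + (q * z) * q ^ (n + 1)) ^ (-(n + 1 : ℤ))) ∧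
    Multipliable (fun n : ℕ => (1 + (q⁻¹ * z) * q ^ (n + 1)) ^ (-(n + 1 : ℤ))) ∧
    (1 + z) * qPochDoubleInv q (q * z) * qPochDoubleInv q (q⁻¹ * z) =
      (qPochDoubleInv q z) ^ 2 := by
  have hqne : q ≠ 0 := by
    intro h; rw [h, norm_zero] at hq0; exact lt_irrefl 0 hq0
  -- rewriting of the factors at the shifted arguments
  have hB : ∀ n : ℕ, 1 + (q * z) * q ^ (n + 1) = 1 + z * q ^ (n + 2) := by
    intro n; rw [pow_succ]; ring
  have hC : ∀ n : ℕ, 1 + (q⁻¹ * z) * q ^ (n + 1) = 1 + z * q ^ n := by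
    intro n
    rw [pow_succ]
    field_simp
  -- multipliability of all needed families
  have MA : Multipliable (fun n : ℕ => (1 + z * q ^ (n + 1)) ^ (-(n + 1 : ℤ))) := by
    exact qPoch_aux_mult q z hq1 (fun n => hz (n + 1)) (fun n => -(n + 1))
      (fun n => by exact abs_le.mpr (by omega))
  have MB : Multipliable (fun n : ℕ => (1 + (q * z) * q ^ (n + 1)) ^ (-(n + 1 : ℤ))) := by
    refine qPoch_aux_mult q (q * z) hq1 (fun n => ?_) (fun n => -(n + 1))
      (fun n => by exact abs_le.mpr (by omega))
    rw [hB n]; exact hz (n + 2)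
  have MC : Multipliable (fun n : ℕ => (1 + (q⁻¹ * z) * q ^ (n + 1)) ^ (-(n + 1 : ℤ))) := by
    refine qPoch_aux_mult q (q⁻¹ * z) hq1 (fun n => ?_) (fun n => -(n + 1))
      (fun n => by exact abs_le.mpr (by omega))
    rw [hC n]; exact hz n
  have MD : Multipliable (fun n : ℕ => (1 + z * q ^ (n + 1)) ^ (-(n : ℤ))) := by
    exact qPoch_aux_mult q z hq1 (fun n => hz (n + 1)) (fun n => -(n : ℤ))
      (fun n => by exact abs_le.mpr (by omega))
  have ME : Multipliable (fun n : ℕ => (1 + z * q ^ (n + 1)) ^ (-((n : ℤ) + 2))) := by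
    exact qPoch_aux_mult q z hq1 (fun n => hz (n + 1)) (fun n => -((n : ℤ) + 2))
      (fun n => by exact abs_le.mpr (by omega))
  refine ⟨MA, MB, MC, ?_⟩
  -- multipliability of the shifted families
  have MD1 : Multipliable (fun n : ℕ => (1 + z * q ^ (n + 1 + 1)) ^ (-((n + 1 : ℕ) : ℤ))) := by
    refine (qPoch_aux_mult q (q * z) hq1 (fun n => by rw [hB n]; exact hz (n + 2))
      (fun n => -((n : ℤ) + 1)) (fun n => by exact abs_le.mpr (by omega))).congr fun n => ?_
    rw [hB n]
    congr 1
  have ME1 : Multipliable (fun n : ℕ => (1 + z * q ^ (n + 1)) ^ (-(((n + 1 : ℕ) : ℤ) + 1))) := by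
    refine (qPoch_aux_mult q z hq1 (fun n => hz (n + 1)) (fun n => -((n : ℤ) + 2))
      (fun n => by exact abs_le.mpr (by omega))).congr fun n => ?_
    congr 1
  -- ψ(qz) equals the product of the family D
  have hψB : qPochDoubleInv q (q * z) = ∏' n : ℕ, (1 + z * q ^ (n + 1)) ^ (-(n : ℤ)) := by
    rw [qPochDoubleInv,
      tprod_eq_zero_mul' (f := fun n : ℕ => (1 + z * q ^ (n + 1)) ^ (-(n : ℤ))) MD1]
    simp only [Nat.cast_zero, neg_zero, zpow_zero, one_mul]
    refine tprod_congr fun n => ?_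
    rw [hB n]
    congr 1
  -- ψ(q⁻¹z) equals (1+z)⁻¹ times the product of the family E
  have h1z : (1 : ℂ) + z ≠ 0 := by
    have := hz 0; rwa [pow_zero, mul_one] at this
  have hψC : qPochDoubleInv q (q⁻¹ * z)
      = (1 + z)⁻¹ * ∏' n : ℕ, (1 + z * q ^ (n + 1)) ^ (-((n : ℤ) + 2)) := by
    have step : qPochDoubleInv q (q⁻¹ * z) = ∏' n : ℕ, (1 + z * q ^ n) ^ (-(n + 1 : ℤ)) := by
      rw [qPochDoubleInv]
      exact tprod_congr fun n => by rw [hC n]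
    rw [step,
      tprod_eq_zero_mul' (f := fun n : ℕ => (1 + z * q ^ n) ^ (-(n + 1 : ℤ))) ME1]
    congr 1
    simp [zpow_neg]
  -- the key splitting of the squared factors
  have hsplit : ∀ n : ℕ,
      ((1 + z * q ^ (n + 1)) ^ (-(n + 1 : ℤ))) ^ 2
        = (1 + z * q ^ (n + 1)) ^ (-(n : ℤ)) * (1 + z * q ^ (n + 1)) ^ (-((n : ℤ) + 2)) := by
    intro n
    rw [← zpow_natCast (((1 + z * q ^ (n + 1)) ^ (-(n + 1 : ℤ)))) 2, ← zpow_mul,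
      ← zpow_add₀ (hz (n + 1))]
    congr 1
    ring
  calc (1 + z) * qPochDoubleInv q (q * z) * qPochDoubleInv q (q⁻¹ * z)
      = (1 + z) * (1 + z)⁻¹ *
        ((∏' n : ℕ, (1 + z * q ^ (n + 1)) ^ (-(n : ℤ))) *
          ∏' n : ℕ, (1 + z * q ^ (n + 1)) ^ (-((n : ℤ) + 2))) := by
        rw [hψB, hψC]; ring
    _ = (∏' n : ℕ, (1 + z * q ^ (n + 1)) ^ (-(n : ℤ))) *
          ∏' n : ℕ, (1 + z * q ^ (n + 1)) ^ (-((n : ℤ) + 2)) := by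
        rw [mul_inv_cancel₀ h1z, one_mul]
    _ = ∏' n : ℕ, ((1 + z * q ^ (n + 1)) ^ (-(n : ℤ)) *
          (1 + z * q ^ (n + 1)) ^ (-((n : ℤ) + 2))) := (Multipliable.tprod_mul MD ME).symm
    _ = ∏' n : ℕ, ((1 + z * q ^ (n + 1)) ^ (-(n + 1 : ℤ))) ^ 2 :=
        tprod_congr fun n => (hsplit n).symm
    _ = (∏' n : ℕ, (1 + z * q ^ (n + 1)) ^ (-(n + 1 : ℤ))) ^ 2 := by
        rw [pow_two, ← Multipliable.tprod_mul MA MA]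
        exact tprod_congr fun n => pow_two _
    _ = (qPochDoubleInv q z) ^ 2 := rfl
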